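/- arXiv:1507.06210 — 2 statements merged into one kernel-verified Lean document; each statement's English description precedes it below -/
import Mathlib

section
/- Let A, B ⊆ ℝⁿ be nonempty closed sets, ρ ≥ 0, ε ≥ 0, and suppose A ∩ ρ𝔹 ⊆ B + ε𝔹 and B ∩ ρ𝔹 ⊆ A + ε𝔹 (the graphs are (ρ,ε)-close). Let m := max(d(0,A), d(0,B)) and let ρ̄ ≥ 0 satisfy ρ ≥ 2ρ̄ + m. Then d_{ρ̄}(A, B) ≤ ε. -/
open scoped Pointwise

/-- Truncated set distance `d_r(A,B) = sup_{|z| ≤ r} |d(z,A) − d(z,B)|`. -/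
noncomputable def dTrunc {E : Type*} [NormedAddCommGroup E] (A B : Set E) (r : ℝ) : ℝ :=
  sSup ((fun z => |Metric.infDist z A - Metric.infDist z B|) '' Metric.closedBall (0 : E) r)

lemma aux9 (n : ℕ) (A B : Set (EuclideanSpace ℝ (Fin n)))
    (hBne : B.Nonempty) (hBcl : IsClosed B)
    (ρ ε ρbar : ℝ) (hρbar : 0 ≤ ρbar)
    (hBA : B ∩ Metric.closedBall (0 : EuclideanSpace ℝ (Fin n)) ρ ⊆
      A + Metric.closedBall (0 : EuclideanSpace ℝ (Fin n)) ε)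
    (hρge : ρ ≥ 2 * ρbar + Metric.infDist (0 : EuclideanSpace ℝ (Fin n)) B)
    (z : EuclideanSpace ℝ (Fin n)) (hz : z ∈ Metric.closedBall (0 : EuclideanSpace ℝ (Fin n)) ρbar) :
    Metric.infDist z A ≤ Metric.infDist z B + ε := by
  obtain ⟨b, hbB, hb⟩ := hBcl.exists_infDist_eq_dist hBne z
  have hz' : dist z 0 ≤ ρbar := Metric.mem_closedBall.mp hz
  have h1 : Metric.infDist z B ≤ Metric.infDist 0 B + dist z 0 :=
    Metric.infDist_le_infDist_add_dist
  have hbball : b ∈ Metric.closedBall (0 : EuclideanSpace ℝ (Fin n)) ρ := by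
    rw [Metric.mem_closedBall]
    calc dist b 0 ≤ dist b z + dist z 0 := dist_triangle _ _ _
      _ = Metric.infDist z B + dist z 0 := by rw [dist_comm, ← hb]
      _ ≤ (Metric.infDist 0 B + dist z 0) + dist z 0 := by linarith
      _ ≤ Metric.infDist 0 B + 2 * ρbar := by linarith
      _ ≤ ρ := by linarith
  obtain ⟨a, haA, e, he, hae⟩ := hBA ⟨hbB, hbball⟩
  have : Metric.infDist z A ≤ dist z a := Metric.infDist_le_dist_of_mem haA
  have hd : dist z a ≤ dist z b + ε := by
    have : dist a b = dist e 0 := by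
      rw [dist_eq_norm, dist_eq_norm]
      have : a - b = -e := by rw [← hae]; beta_reduce; abel
      rw [this, norm_neg, sub_zero]
    calc dist z a ≤ dist z b + dist b a := dist_triangle _ _ _
      _ = dist z b + dist e 0 := by rw [dist_comm b a, this]
      _ ≤ dist z b + ε := by linarith [Metric.mem_closedBall.mp he]
  linarith [hb ▸ hd, this]

theorem stmt9 (n : ℕ) (A B : Set (EuclideanSpace ℝ (Fin n)))
    (hAne : A.Nonempty) (hAcl : IsClosed A) (hBne : B.Nonempty) (hBcl : IsClosed B)
    (ρ ε ρbar : ℝ) (hρ : 0 ≤ ρ) (hε : 0 ≤ ε) (hρbar : 0 ≤ ρbar)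
    (hAB : A ∩ Metric.closedBall (0 : EuclideanSpace ℝ (Fin n)) ρ ⊆
      B + Metric.closedBall (0 : EuclideanSpace ℝ (Fin n)) ε)
    (hBA : B ∩ Metric.closedBall (0 : EuclideanSpace ℝ (Fin n)) ρ ⊆
      A + Metric.closedBall (0 : EuclideanSpace ℝ (Fin n)) ε)
    (hρge : ρ ≥ 2 * ρbar + max (Metric.infDist (0 : EuclideanSpace ℝ (Fin n)) A)
      (Metric.infDist (0 : EuclideanSpace ℝ (Fin n)) B)) :
    dTrunc A B ρbar ≤ ε := by
  apply Real.sSup_le _ hε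
  rintro x ⟨z, hz, rfl⟩
  have hmaxA := le_max_left (Metric.infDist (0 : EuclideanSpace ℝ (Fin n)) A)
      (Metric.infDist (0 : EuclideanSpace ℝ (Fin n)) B)
  have hmaxB := le_max_right (Metric.infDist (0 : EuclideanSpace ℝ (Fin n)) A)
      (Metric.infDist (0 : EuclideanSpace ℝ (Fin n)) B)
  have hA : Metric.infDist z A ≤ Metric.infDist z B + ε :=
    aux9 n A B hBne hBcl ρ ε ρbar hρbar hBA (by linarith) z hz
  have hB : Metric.infDist z B ≤ Metric.infDist z A + ε :=
    aux9 n B A hAne hAcl ρ ε ρbar hρbar hAB (by linarith) z hz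
  simp only [abs_sub_le_iff]
  constructor <;> linarith
end

section
/- Let A, B ⊆ ℝⁿ be nonempty closed sets with m := max(d(0,A), d(0,B)). Suppose the graphs are (ρ,ε)-close for some ε ≥ 0 and all ρ satisfying ρ ≥ 2ρ̄ + m with a fixed ρ̄ ≥ 0, i.e., A ∩ ρ𝔹 ⊆ B + ε𝔹 and B ∩ ρ𝔹 ⊆ A + ε𝔹 for such ρ. Then the integrated set distance satisfies 𝐝(A,B) ≤ ε(1 − e^{−ρ̄}) + (ρ̄ + m + 2)e^{−ρ̄}. -/
open scoped Pointwise
open Metric MeasureTheory Set Real Filter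

lemma key_est {n : ℕ} (C D : Set (EuclideanSpace ℝ (Fin n))) (hC : IsClosed C)
    (hCne : C.Nonempty) (ε ρ : ℝ)
    (hsub : C ∩ Metric.closedBall 0 ρ ⊆ D + Metric.closedBall 0 ε)
    (z : EuclideanSpace ℝ (Fin n)) (hz : ‖z‖ + Metric.infDist z C ≤ ρ) :
    Metric.infDist z D ≤ Metric.infDist z C + ε := by
  obtain ⟨a, haC, ha⟩ := hC.exists_infDist_eq_dist hCne z
  have haball : a ∈ Metric.closedBall (0 : EuclideanSpace ℝ (Fin n)) ρ := by
    rw [Metric.mem_closedBall, dist_zero_right]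
    calc ‖a‖ ≤ ‖z‖ + dist z a := by
          have h1 := norm_sub_norm_le a z
          rw [dist_eq_norm, norm_sub_rev]
          linarith
      _ ≤ ρ := by rw [← ha]; exact hz
  obtain ⟨b, hbD, v, hv, hbv⟩ := hsub ⟨haC, haball⟩
  have hvd : ‖v‖ ≤ ε := by simpa [dist_zero_right] using hv
  have hzb : Metric.infDist z D ≤ dist z b := Metric.infDist_le_dist_of_mem hbD
  have hab : dist a b = ‖v‖ := by
    rw [dist_eq_norm]
    have : a - b = v := by rw [← hbv, add_sub_cancel_left]
    rw [this]
  calc Metric.infDist z D ≤ dist z b := hzb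
    _ ≤ dist z a + dist a b := dist_triangle z a b
    _ ≤ Metric.infDist z C + ε := by rw [← ha, hab]; linarith


/-- Integrated set distance `𝐝(A,B) = ∫₀^∞ d_r(A,B) e^{−r} dr`. -/
noncomputable def dInt {E : Type*} [NormedAddCommGroup E] (A B : Set E) : ℝ :=
  ∫ r in Set.Ioi (0 : ℝ), dTrunc A B r * Real.exp (-r)

theorem stmt16 (n : ℕ) (A B : Set (EuclideanSpace ℝ (Fin n)))
    (hAne : A.Nonempty) (hAcl : IsClosed A) (hBne : B.Nonempty) (hBcl : IsClosed B)
    (ε ρbar : ℝ) (hε : 0 ≤ ε) (hρbar : 0 ≤ ρbar)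
    (m : ℝ)
    (hm : m = max (Metric.infDist (0 : EuclideanSpace ℝ (Fin n)) A)
      (Metric.infDist (0 : EuclideanSpace ℝ (Fin n)) B))
    (hclose : ∀ ρ : ℝ, ρ ≥ 2 * ρbar + m →
      A ∩ Metric.closedBall (0 : EuclideanSpace ℝ (Fin n)) ρ ⊆
        B + Metric.closedBall (0 : EuclideanSpace ℝ (Fin n)) ε ∧
      B ∩ Metric.closedBall (0 : EuclideanSpace ℝ (Fin n)) ρ ⊆
        A + Metric.closedBall (0 : EuclideanSpace ℝ (Fin n)) ε) :
    dInt A B ≤ ε * (1 - Real.exp (-ρbar)) + (ρbar + m + 2) * Real.exp (-ρbar) := by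
  have hmA : Metric.infDist (0 : EuclideanSpace ℝ (Fin n)) A ≤ m := hm ▸ le_max_left _ _
  have hmB : Metric.infDist (0 : EuclideanSpace ℝ (Fin n)) B ≤ m := hm ▸ le_max_right _ _
  have hm0 : 0 ≤ m := le_trans Metric.infDist_nonneg hmA
  -- pointwise bound on elements of the sup set
  have hptA : ∀ r : ℝ, ∀ z ∈ Metric.closedBall (0 : EuclideanSpace ℝ (Fin n)) r,
      |Metric.infDist z A - Metric.infDist z B| ≤ r + m := by
    intro r z hz
    rw [Metric.mem_closedBall, dist_zero_right] at hz
    have h1 : Metric.infDist z A ≤ r + m := by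
      have := Metric.infDist_le_infDist_add_dist (x := z) (y := (0 : EuclideanSpace ℝ (Fin n))) (s := A)
      rw [dist_zero_right] at this
      linarith
    have h2 : Metric.infDist z B ≤ r + m := by
      have := Metric.infDist_le_infDist_add_dist (x := z) (y := (0 : EuclideanSpace ℝ (Fin n))) (s := B)
      rw [dist_zero_right] at this
      linarith
    have h3 := Metric.infDist_nonneg (s := A) (x := z)
    have h4 := Metric.infDist_nonneg (s := B) (x := z)
    rw [abs_le]; constructor <;> linarith
  -- dTrunc bounds
  have hd_le : ∀ r : ℝ, 0 ≤ r + m → dTrunc A B r ≤ r + m := by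
    intro r hr
    apply Real.sSup_le _ hr
    rintro x ⟨z, hz, rfl⟩
    exact hptA r z hz
  have hd_nonneg : ∀ r : ℝ, 0 ≤ dTrunc A B r := by
    intro r
    apply Real.sSup_nonneg
    rintro x ⟨z, _, rfl⟩
    exact abs_nonneg _
  -- small-radius bound
  have hd_eps : ∀ r ∈ Set.Ioc (0:ℝ) ρbar, dTrunc A B r ≤ ε := by
    intro r hr
    apply Real.sSup_le _ hε
    rintro x ⟨z, hz, rfl⟩
    rw [Metric.mem_closedBall, dist_zero_right] at hz
    have hzA : Metric.infDist z A ≤ ρbar + m := by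
      have := Metric.infDist_le_infDist_add_dist (x := z) (y := (0 : EuclideanSpace ℝ (Fin n))) (s := A)
      rw [dist_zero_right] at this
      have : Metric.infDist z A ≤ m + ‖z‖ := by linarith
      linarith [hr.2, hz.trans hr.2]
    have hzB : Metric.infDist z B ≤ ρbar + m := by
      have := Metric.infDist_le_infDist_add_dist (x := z) (y := (0 : EuclideanSpace ℝ (Fin n))) (s := B)
      rw [dist_zero_right] at this
      linarith [hz.trans hr.2]
    obtain ⟨hAB, hBA⟩ := hclose (2 * ρbar + m) le_rfl
    have h1 : Metric.infDist z B ≤ Metric.infDist z A + ε :=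
      key_est A B hAcl hAne ε (2 * ρbar + m) hAB z (by linarith [hz.trans hr.2])
    have h2 : Metric.infDist z A ≤ Metric.infDist z B + ε :=
      key_est B A hBcl hBne ε (2 * ρbar + m) hBA z (by linarith [hz.trans hr.2])
    rw [abs_le]; constructor <;> linarith
  -- monotonicity of dTrunc
  have hmono : Monotone (dTrunc A B) := by
    intro r₁ r₂ h12
    by_cases hr1 : 0 ≤ r₁
    · apply csSup_le_csSup
      · exact ⟨r₂ + m, by rintro x ⟨z, hz, rfl⟩; exact hptA r₂ z hz⟩
      · exact ⟨_, ⟨0, Metric.mem_closedBall_self hr1, rfl⟩⟩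
      · exact Set.image_mono (Metric.closedBall_subset_closedBall h12)
    · unfold dTrunc
      rw [Metric.closedBall_eq_empty.2 (by linarith), Set.image_empty, Real.sSup_empty]
      exact hd_nonneg r₂
  have hmeas : Measurable (fun r => dTrunc A B r * Real.exp (-r)) :=
    hmono.measurable.mul (Real.measurable_exp.comp measurable_neg)
  -- dominating function on Ioi 0
  set g : ℝ → ℝ := fun r => (r + m) * Real.exp (-r) with hg_def
  have hGderiv : ∀ r : ℝ, HasDerivAt (fun x => -((x + m + 1) * Real.exp (-x))) (g r) r := by
    intro r
    have h1 : HasDerivAt (fun x : ℝ => x + m + 1) 1 r := by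
      simpa using ((hasDerivAt_id r).add_const m).add_const 1
    have h2 : HasDerivAt (fun x : ℝ => Real.exp (-x)) (-Real.exp (-r)) r := by
      simpa using ((hasDerivAt_id r).neg.exp)
    have := (h1.mul h2).neg
    convert this using 1
    · rfl
    · rfl
    · rfl
    · show (r + m) * Real.exp (-r) = _
      ring
  have hGtend : Tendsto (fun x => -((x + m + 1) * Real.exp (-x))) atTop (nhds 0) := by
    have t1 : Tendsto (fun x : ℝ => x * Real.exp (-x)) atTop (nhds 0) := by
      simpa using Real.tendsto_pow_mul_exp_neg_atTop_nhds_zero 1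
    have t2 : Tendsto (fun x : ℝ => (m + 1) * Real.exp (-x)) atTop (nhds 0) := by
      simpa using (Real.tendsto_exp_neg_atTop_nhds_zero.const_mul (m + 1))
    have := (t1.add t2).neg
    simp only [add_zero, neg_zero] at this
    convert this using 2 with x
    ring
  have hgpos : ∀ r ∈ Set.Ioi (0:ℝ), 0 ≤ g r :=
    fun r hr => mul_nonneg (by simp at hr; linarith) (Real.exp_pos _).le
  have hg_int : IntegrableOn g (Set.Ioi 0) :=
    integrableOn_Ioi_deriv_of_nonneg' (fun x _ => hGderiv x) hgpos hGtend
  have hf_bound : ∀ r ∈ Set.Ioi (0:ℝ), ‖dTrunc A B r * Real.exp (-r)‖ ≤ g r := by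
    intro r hr
    simp only [Set.mem_Ioi] at hr
    rw [Real.norm_eq_abs, abs_of_nonneg (mul_nonneg (hd_nonneg r) (Real.exp_pos _).le)]
    exact mul_le_mul_of_nonneg_right (hd_le r (by linarith)) (Real.exp_pos _).le
  have hf_int : IntegrableOn (fun r => dTrunc A B r * Real.exp (-r)) (Set.Ioi 0) := by
    apply Integrable.mono' hg_int hmeas.aestronglyMeasurable
    exact (ae_restrict_iff' measurableSet_Ioi).2 (Filter.Eventually.of_forall hf_bound)
  -- split the integral
  have hsplit : Set.Ioc (0:ℝ) ρbar ∪ Set.Ioi ρbar = Set.Ioi 0 := Set.Ioc_union_Ioi_eq_Ioi hρbar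
  have hdisj : Disjoint (Set.Ioc (0:ℝ) ρbar) (Set.Ioi ρbar) := by
    apply Set.disjoint_left.2
    rintro x ⟨_, hx2⟩ hx3
    exact absurd hx3 (not_lt.2 hx2)
  have hint1 : IntegrableOn (fun r => dTrunc A B r * Real.exp (-r)) (Set.Ioc 0 ρbar) :=
    hf_int.mono_set (by rw [← hsplit]; exact Set.subset_union_left)
  have hint2 : IntegrableOn (fun r => dTrunc A B r * Real.exp (-r)) (Set.Ioi ρbar) :=
    hf_int.mono_set (by rw [← hsplit]; exact Set.subset_union_right)
  have heq : dInt A B = (∫ r in Set.Ioc (0:ℝ) ρbar, dTrunc A B r * Real.exp (-r))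
      + ∫ r in Set.Ioi ρbar, dTrunc A B r * Real.exp (-r) := by
    rw [dInt, ← hsplit, setIntegral_union hdisj measurableSet_Ioi hint1 hint2]
  -- bound first part
  have hb1 : (∫ r in Set.Ioc (0:ℝ) ρbar, dTrunc A B r * Real.exp (-r))
      ≤ ε * (1 - Real.exp (-ρbar)) := by
    have hcont : IntegrableOn (fun r => ε * Real.exp (-r)) (Set.Ioc 0 ρbar) := by
      apply Continuous.integrableOn_Ioc
      exact continuous_const.mul (Real.continuous_exp.comp continuous_neg)
    have hstep : (∫ r in Set.Ioc (0:ℝ) ρbar, dTrunc A B r * Real.exp (-r))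
        ≤ ∫ r in Set.Ioc (0:ℝ) ρbar, ε * Real.exp (-r) := by
      apply setIntegral_mono_on hint1 hcont measurableSet_Ioc
      intro r hr
      exact mul_le_mul_of_nonneg_right (hd_eps r hr) (Real.exp_pos _).le
    have hval : (∫ r in Set.Ioc (0:ℝ) ρbar, ε * Real.exp (-r)) = ε * (1 - Real.exp (-ρbar)) := by
      rw [← intervalIntegral.integral_of_le hρbar]
      rw [intervalIntegral.integral_const_mul]
      have : (∫ r in (0:ℝ)..ρbar, Real.exp (-r)) = 1 - Real.exp (-ρbar) := by
        have : ∀ x : ℝ, HasDerivAt (fun y => -Real.exp (-y)) (Real.exp (-x)) x := by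
          intro x
          have h := ((hasDerivAt_id x).neg.exp).neg
          simp at h
          exact h
        rw [intervalIntegral.integral_eq_sub_of_hasDerivAt (fun x _ => this x)]
        · simp; ring
        · apply Continuous.intervalIntegrable
          exact Real.continuous_exp.comp continuous_neg
      rw [this]
    linarith [hstep, hval.le]
  -- bound second part
  have hb2 : (∫ r in Set.Ioi ρbar, dTrunc A B r * Real.exp (-r))
      ≤ (ρbar + m + 1) * Real.exp (-ρbar) := by
    have hg_int2 : IntegrableOn g (Set.Ioi ρbar) :=
      integrableOn_Ioi_deriv_of_nonneg' (fun x _ => hGderiv x)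
        (fun r hr => mul_nonneg (by simp at hr; linarith) (Real.exp_pos _).le) hGtend
    have hstep : (∫ r in Set.Ioi ρbar, dTrunc A B r * Real.exp (-r))
        ≤ ∫ r in Set.Ioi ρbar, g r := by
      apply setIntegral_mono_on hint2 hg_int2 measurableSet_Ioi
      intro r hr
      simp only [Set.mem_Ioi] at hr
      exact mul_le_mul_of_nonneg_right (hd_le r (by linarith)) (Real.exp_pos _).le
    have hval : (∫ r in Set.Ioi ρbar, g r) = (ρbar + m + 1) * Real.exp (-ρbar) := by
      rw [integral_Ioi_of_hasDerivAt_of_nonneg' (fun x _ => hGderiv x)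
        (fun r hr => mul_nonneg (by simp at hr; linarith) (Real.exp_pos _).le) hGtend]
      ring
    linarith [hstep, hval.le]
  have hexp := Real.exp_pos (-ρbar)
  rw [heq]
  nlinarith [hb1, hb2, hexp]
end
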